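/- For any hypergraph H of degree at most d, there is a monotone hypergraph program of size O(|H|) computing the hypergraph function f_H whose underlying hypergraph has degree at most max(2, d). -/

import Mathlib

/-- Evaluation of a vertex label that is either a constant (0 or 1) or a (positive)
Boolean variable. -/
def labEval {ι : Type*} (α : ι → Bool) : Bool ⊕ ι → Bool
  | .inl b => b
  | .inr i => α i

/-- A monotone hypergraph program over an abstract set `ι` of variables: vertices are
labelled by 0, 1 or a positive variable. -/
structure MonHGP (ι : Type*) where
  nv : ℕ
  edges : Finset (Finset (Fin nv))
  label : Fin nv → Bool ⊕ ι

/-- The size of an HGP: number of vertices plus number of hyperedges. -/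
def MonHGP.size {ι : Type*} (P : MonHGP ι) : ℕ := P.nv + P.edges.card

/-- Degree bound for an HGP: every vertex lies in at most `d` hyperedges. -/
def MonHGP.degLE {ι : Type*} (P : MonHGP ι) (d : ℕ) : Prop :=
  ∀ v : Fin P.nv, (P.edges.filter fun e => v ∈ e).card ≤ d

/-- Output of a monotone HGP: 1 iff some independent set of hyperedges contains all
vertices whose labels evaluate to 0. -/
def MonHGP.output {ι : Type*} (P : MonHGP ι) (α : ι → Bool) : Prop :=
  ∃ S ⊆ P.edges, ((S : Set (Finset (Fin P.nv))).Pairwise fun e f => Disjoint e f) ∧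
    ∀ v : Fin P.nv, labEval α (P.label v) = false → ∃ e ∈ S, v ∈ e

/-- The hypergraph function `f_H` over variables `p_v` (for vertices `v : Fin N`) and `p_e`
(for hyperedges `e ∈ E`). -/
def fHgen (N : ℕ) (E : Finset (Finset (Fin N))) (α : Fin N ⊕ Finset (Fin N) → Bool) : Prop :=
  ∃ S ⊆ E, ((S : Set (Finset (Fin N))).Pairwise fun e f => Disjoint e f) ∧
    (∀ e ∈ S, α (Sum.inr e) = true) ∧
    (∀ v : Fin N, (∀ e ∈ S, v ∉ e) → α (Sum.inl v) = true)

namespace Stmt4Aux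

variable (N : ℕ) (E : Finset (Finset (Fin N)))

/-- number of hyperedges -/
def k : ℕ := E.card

/-- enumeration of the hyperedges -/
noncomputable def g : Fin (k N E) → Finset (Fin N) :=
  fun i => ((Fintype.equivFinOfCardEq (Fintype.card_coe E)).symm i : Finset (Fin N))

lemma g_mem (i : Fin (k N E)) : g N E i ∈ E :=
  ((Fintype.equivFinOfCardEq (Fintype.card_coe E)).symm i).2

lemma g_inj : Function.Injective (g N E) := by
  intro i j h
  have := Subtype.ext (p := fun e => e ∈ E) h
  exact (Fintype.equivFinOfCardEq (Fintype.card_coe E)).symm.injective this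

lemma g_surj {e : Finset (Fin N)} (he : e ∈ E) : ∃ i, g N E i = e :=
  ⟨Fintype.equivFinOfCardEq (Fintype.card_coe E) ⟨e, he⟩, by
    simp [g]⟩

/-- total number of program vertices -/
def nv : ℕ := N + k N E + k N E

/-- embedding of original vertices -/
def ov (v : Fin N) : Fin (nv N E) := ⟨v.1, by have := v.2; unfold nv; omega⟩

/-- the `a_e` vertices -/
def av (i : Fin (k N E)) : Fin (nv N E) := ⟨N + i.1, by have := i.2; unfold nv; omega⟩

/-- the `b_e` vertices -/
def bv (i : Fin (k N E)) : Fin (nv N E) := ⟨N + k N E + i.1, by have := i.2; unfold nv; omega⟩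

lemma ov_inj : Function.Injective (ov N E) := by
  intro a b h
  have h2 : ((ov N E a : Fin (nv N E)) : ℕ) = ((ov N E b : Fin (nv N E)) : ℕ) :=
    congrArg Fin.val h
  exact Fin.ext h2

lemma av_inj : Function.Injective (av N E) := by
  intro a b h
  have : N + a.1 = N + b.1 := congrArg Fin.val h
  exact Fin.ext (by omega)

lemma bv_inj : Function.Injective (bv N E) := by
  intro a b h
  have : N + k N E + a.1 = N + k N E + b.1 := congrArg Fin.val h
  exact Fin.ext (by omega)

lemma ov_ne_av (v : Fin N) (i : Fin (k N E)) : ov N E v ≠ av N E i := by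
  intro h
  have : (v : ℕ) = N + i.1 := congrArg Fin.val h
  have := v.2; omega

lemma ov_ne_bv (v : Fin N) (i : Fin (k N E)) : ov N E v ≠ bv N E i := by
  intro h
  have : (v : ℕ) = N + k N E + i.1 := congrArg Fin.val h
  have := v.2; omega

lemma av_ne_bv (i j : Fin (k N E)) : av N E i ≠ bv N E j := by
  intro h
  have : N + (i:ℕ) = N + k N E + (j:ℕ) := congrArg Fin.val h
  have := i.2; omega

/-- the program edge `e ∪ {a_e}` -/
noncomputable def eEdge (i : Fin (k N E)) : Finset (Fin (nv N E)) :=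
  insert (av N E i) ((g N E i).image (ov N E))

/-- the program edge `{a_e, b_e}` -/
noncomputable def dEdge (i : Fin (k N E)) : Finset (Fin (nv N E)) :=
  {av N E i, bv N E i}

lemma mem_eEdge {w : Fin (nv N E)} {i : Fin (k N E)} :
    w ∈ eEdge N E i ↔ w = av N E i ∨ ∃ v ∈ g N E i, ov N E v = w := by
  simp [eEdge]

lemma mem_dEdge {w : Fin (nv N E)} {i : Fin (k N E)} :
    w ∈ dEdge N E i ↔ w = av N E i ∨ w = bv N E i := by
  simp [dEdge]

lemma av_mem_eEdge_iff {i j : Fin (k N E)} : av N E i ∈ eEdge N E j ↔ i = j := by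
  rw [mem_eEdge]
  constructor
  · rintro (h | ⟨v, _, h⟩)
    · exact av_inj N E h
    · exact absurd h (ov_ne_av N E v i)
  · rintro rfl; exact Or.inl rfl

lemma bv_not_mem_eEdge {i j : Fin (k N E)} : bv N E i ∉ eEdge N E j := by
  rw [mem_eEdge]
  rintro (h | ⟨v, _, h⟩)
  · exact av_ne_bv N E j i h.symm
  · exact ov_ne_bv N E v i h

lemma ov_mem_eEdge_iff {v : Fin N} {i : Fin (k N E)} :
    ov N E v ∈ eEdge N E i ↔ v ∈ g N E i := by
  rw [mem_eEdge]
  constructor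
  · rintro (h | ⟨u, hu, h⟩)
    · exact absurd h (ov_ne_av N E v i)
    · exact (ov_inj N E h) ▸ hu
  · intro h; exact Or.inr ⟨v, h, rfl⟩

lemma ov_not_mem_dEdge {v : Fin N} {i : Fin (k N E)} : ov N E v ∉ dEdge N E i := by
  rw [mem_dEdge]
  rintro (h | h)
  · exact ov_ne_av N E v i h
  · exact ov_ne_bv N E v i h

lemma av_mem_dEdge_iff {i j : Fin (k N E)} : av N E i ∈ dEdge N E j ↔ i = j := by
  rw [mem_dEdge]
  constructor
  · rintro (h | h)
    · exact av_inj N E h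
    · exact absurd h (av_ne_bv N E i j)
  · rintro rfl; exact Or.inl rfl

lemma bv_mem_dEdge_iff {i j : Fin (k N E)} : bv N E i ∈ dEdge N E j ↔ i = j := by
  rw [mem_dEdge]
  constructor
  · rintro (h | h)
    · exact absurd h.symm (av_ne_bv N E j i)
    · exact bv_inj N E h
  · rintro rfl; exact Or.inr rfl

lemma eEdge_inj : Function.Injective (eEdge N E) := by
  intro i j h
  have : av N E i ∈ eEdge N E j := h ▸ (av_mem_eEdge_iff N E).2 rfl
  exact (av_mem_eEdge_iff N E).1 this

lemma dEdge_inj : Function.Injective (dEdge N E) := by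
  intro i j h
  have : av N E i ∈ dEdge N E j := h ▸ (av_mem_dEdge_iff N E).2 rfl
  exact (av_mem_dEdge_iff N E).1 this

lemma eEdge_ne_dEdge (i j : Fin (k N E)) : eEdge N E i ≠ dEdge N E j := by
  intro h
  have : bv N E j ∈ eEdge N E i := by rw [h, bv_mem_dEdge_iff]
  exact bv_not_mem_eEdge N E this

/-- labelling -/
noncomputable def lab (w : Fin (nv N E)) : Bool ⊕ (Fin N ⊕ Finset (Fin N)) :=
  if h : (w : ℕ) < N then .inr (.inl ⟨w, h⟩)
  else if h2 : (w : ℕ) < N + k N E then .inl true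
  else .inr (.inr (g N E ⟨(w : ℕ) - (N + k N E), by
    have := w.2; unfold nv at this; omega⟩))

lemma lab_ov (v : Fin N) : lab N E (ov N E v) = .inr (.inl v) := by
  unfold lab ov
  rw [dif_pos v.2]

lemma lab_av (i : Fin (k N E)) : lab N E (av N E i) = .inl true := by
  unfold lab av
  have h1 : ¬ (N + (i:ℕ) < N) := by omega
  have h2 : N + (i:ℕ) < N + k N E := by have := i.2; omega
  rw [dif_neg h1, dif_pos h2]

lemma lab_bv (i : Fin (k N E)) : lab N E (bv N E i) = .inr (.inr (g N E i)) := by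
  unfold lab bv
  have h1 : ¬ (N + k N E + (i:ℕ) < N) := by omega
  have h2 : ¬ (N + k N E + (i:ℕ) < N + k N E) := by omega
  rw [dif_neg h1, dif_neg h2]
  congr 2
  congr 1
  apply Fin.ext
  show N + k N E + (i:ℕ) - (N + k N E) = (i:ℕ)
  omega

/-- every vertex is of one of the three forms -/
lemma vert_cases (w : Fin (nv N E)) :
    (∃ v, w = ov N E v) ∨ (∃ i, w = av N E i) ∨ (∃ i, w = bv N E i) := by
  have hw := w.2
  unfold nv at hw
  rcases lt_or_ge (w : ℕ) N with h | h
  · exact Or.inl ⟨⟨w, h⟩, Fin.ext rfl⟩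
  rcases lt_or_ge (w : ℕ) (N + k N E) with h2 | h2
  · exact Or.inr (Or.inl ⟨⟨(w:ℕ) - N, by omega⟩, Fin.ext (show (w:ℕ) = N + ((w:ℕ) - N) by omega)⟩)
  · exact Or.inr (Or.inr ⟨⟨(w:ℕ) - (N + k N E), by omega⟩, Fin.ext (show (w:ℕ) = N + k N E + ((w:ℕ) - (N + k N E)) by omega)⟩)

/-- the program -/
@[reducible] noncomputable def prog : MonHGP (Fin N ⊕ Finset (Fin N)) where
  nv := nv N E
  edges := (Finset.univ.image (eEdge N E)) ∪ (Finset.univ.image (dEdge N E))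
  label := lab N E

lemma mem_prog_edges {x : Finset (Fin (nv N E))} :
    x ∈ (prog N E).edges ↔ (∃ i, eEdge N E i = x) ∨ (∃ i, dEdge N E i = x) := by
  simp [prog]

lemma disj_ee {i j : Fin (k N E)} (h : Disjoint (g N E i) (g N E j)) (hij : i ≠ j) :
    Disjoint (eEdge N E i) (eEdge N E j) := by
  rw [Finset.disjoint_left]
  intro a ha hb
  rcases (mem_eEdge N E).1 ha with rfl | ⟨v, hv, rfl⟩
  · exact hij ((av_mem_eEdge_iff N E).1 hb)
  · exact Finset.disjoint_left.mp h hv ((ov_mem_eEdge_iff N E).1 hb)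

lemma disj_ed {i j : Fin (k N E)} (hij : i ≠ j) :
    Disjoint (eEdge N E i) (dEdge N E j) := by
  rw [Finset.disjoint_right]
  intro a ha hb
  rcases (mem_dEdge N E).1 ha with rfl | rfl
  · exact hij ((av_mem_eEdge_iff N E).1 hb).symm
  · exact bv_not_mem_eEdge N E hb

lemma disj_dd {i j : Fin (k N E)} (hij : i ≠ j) :
    Disjoint (dEdge N E i) (dEdge N E j) := by
  rw [Finset.disjoint_left]
  intro a ha hb
  rcases (mem_dEdge N E).1 ha with rfl | rfl
  · exact hij ((av_mem_dEdge_iff N E).1 hb)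
  · exact hij ((bv_mem_dEdge_iff N E).1 hb)

lemma disj_gg {i j : Fin (k N E)} (h : Disjoint (eEdge N E i) (eEdge N E j)) :
    Disjoint (g N E i) (g N E j) := by
  rw [Finset.disjoint_left]
  intro a ha hb
  exact Finset.disjoint_left.mp h ((ov_mem_eEdge_iff N E).2 ha) ((ov_mem_eEdge_iff N E).2 hb)

end Stmt4Aux

open Stmt4Aux in
/-- For any hypergraph `H` of degree at most `d`, there is a monotone
hypergraph program of size `O(|H|)` computing the hypergraph function `f_H` whose
underlying hypergraph has degree at most `max 2 d`. -/
theorem stmt_4 :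
    ∃ c : ℕ, ∀ (N : ℕ) (E : Finset (Finset (Fin N))) (d : ℕ),
      (∀ v : Fin N, (E.filter fun e => v ∈ e).card ≤ d) →
      ∃ P : MonHGP (Fin N ⊕ Finset (Fin N)),
        (∀ α, P.output α ↔ fHgen N E α) ∧ P.degLE (max 2 d) ∧
        P.size ≤ c * (N + E.card) := by
  refine ⟨4, fun N E d hdeg => ⟨prog N E, ?_, ?_, ?_⟩⟩
  · -- correctness
    intro α
    constructor
    · -- output → fHgen
      rintro ⟨S', hS'sub, hS'dis, hS'cov⟩
      refine ⟨(Finset.univ.filter fun i => eEdge N E i ∈ S').image (g N E), ?_, ?_, ?_, ?_⟩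
      · intro e he
        rw [Finset.mem_image] at he
        obtain ⟨i, _, rfl⟩ := he
        exact g_mem N E i
      · intro e he f hf hef
        simp only [Finset.coe_image, Set.mem_image, Finset.mem_coe,
          Finset.mem_filter, Finset.mem_univ, true_and, Finset.coe_filter,
          Set.mem_setOf_eq] at he hf
        obtain ⟨i, hi, rfl⟩ := he
        obtain ⟨j, hj, rfl⟩ := hf
        have hij : i ≠ j := fun h => hef (congrArg _ h)
        have hne : eEdge N E i ≠ eEdge N E j := fun h => hij (eEdge_inj N E h)
        exact disj_gg N E (hS'dis hi hj hne)
      · intro e he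
        rw [Finset.mem_image] at he
        obtain ⟨i, hi, rfl⟩ := he
        rw [Finset.mem_filter] at hi
        rcases Bool.eq_false_or_eq_true (α (Sum.inr (g N E i))) with hb | hb
        · exact hb
        · exfalso
          have hcov := hS'cov (bv N E i) (by
            show labEval α (lab N E (bv N E i)) = false
            rw [lab_bv]; exact hb)
          obtain ⟨x, hx, hbx⟩ := hcov
          rcases (mem_prog_edges N E).1 (hS'sub hx) with ⟨j, rfl⟩ | ⟨j, rfl⟩
          · exact bv_not_mem_eEdge N E hbx
          · have hji : j = i := ((bv_mem_dEdge_iff N E).1 hbx).symm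
            rw [hji] at hx
            have hne : eEdge N E i ≠ dEdge N E i := eEdge_ne_dEdge N E i i
            have hd := hS'dis hi.2 hx hne
            exact Finset.disjoint_left.mp hd ((av_mem_eEdge_iff N E).2 rfl)
              ((av_mem_dEdge_iff N E).2 rfl)
      · intro v hv
        rcases Bool.eq_false_or_eq_true (α (Sum.inl v)) with hb | hb
        · exact hb
        · exfalso
          have hcov := hS'cov (ov N E v) (by
            show labEval α (lab N E (ov N E v)) = false
            rw [lab_ov]; exact hb)
          obtain ⟨x, hx, hbx⟩ := hcov
          rcases (mem_prog_edges N E).1 (hS'sub hx) with ⟨j, rfl⟩ | ⟨j, rfl⟩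
          · have hvj : v ∈ g N E j := (ov_mem_eEdge_iff N E).1 hbx
            have : g N E j ∈ (Finset.univ.filter fun i => eEdge N E i ∈ S').image (g N E) := by
              rw [Finset.mem_image]
              exact ⟨j, Finset.mem_filter.2 ⟨Finset.mem_univ _, hx⟩, rfl⟩
            exact hv _ this hvj
          · exact ov_not_mem_dEdge N E hbx
    · -- fHgen → output
      rintro ⟨S, hSE, hSdis, hSα, hScov⟩
      refine ⟨((Finset.univ.filter fun i => g N E i ∈ S).image (eEdge N E)) ∪
        ((Finset.univ.filter fun i => α (Sum.inr (g N E i)) = false).image (dEdge N E)),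
        ?_, ?_, ?_⟩
      · intro x hx
        rw [Finset.mem_union, Finset.mem_image, Finset.mem_image] at hx
        rw [mem_prog_edges]
        rcases hx with ⟨i, _, rfl⟩ | ⟨i, _, rfl⟩
        · exact Or.inl ⟨i, rfl⟩
        · exact Or.inr ⟨i, rfl⟩
      · intro x hx y hy hxy
        simp only [Finset.coe_union, Set.mem_union, Finset.coe_image, Set.mem_image,
          Finset.mem_coe, Finset.mem_filter, Finset.mem_univ, true_and,
          Finset.coe_filter, Set.mem_setOf_eq] at hx hy
        rcases hx with ⟨i, hi, rfl⟩ | ⟨i, hi, rfl⟩ <;>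
          rcases hy with ⟨j, hj, rfl⟩ | ⟨j, hj, rfl⟩
        · have hij : i ≠ j := fun h => hxy (congrArg _ h)
          have hgg : g N E i ≠ g N E j := fun h => hij (g_inj N E h)
          exact disj_ee N E (hSdis hi hj hgg) hij
        · have hij : i ≠ j := by
            rintro rfl
            rw [hSα _ hi] at hj
            exact Bool.noConfusion hj
          exact disj_ed N E hij
        · have hij : j ≠ i := by
            rintro rfl
            rw [hSα _ hj] at hi
            exact Bool.noConfusion hi
          exact (disj_ed N E hij).symm
        · have hij : i ≠ j := fun h => hxy (congrArg _ h)
          exact disj_dd N E hij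
      · intro w hw
        rcases vert_cases N E w with ⟨v, rfl⟩ | ⟨i, rfl⟩ | ⟨i, rfl⟩
        · have hb : α (Sum.inl v) = false := by
            have : labEval α (lab N E (ov N E v)) = false := hw
            rwa [lab_ov] at this
          have : ¬ (∀ e ∈ S, v ∉ e) := fun h => by
            rw [hScov v h] at hb; exact Bool.noConfusion hb
          push_neg at this
          obtain ⟨e, heS, hve⟩ := this
          obtain ⟨i, rfl⟩ := g_surj N E (hSE heS)
          refine ⟨eEdge N E i, ?_, (ov_mem_eEdge_iff N E).2 hve⟩
          rw [Finset.mem_union, Finset.mem_image]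
          exact Or.inl ⟨i, Finset.mem_filter.2 ⟨Finset.mem_univ _, heS⟩, rfl⟩
        · exfalso
          have : labEval α (lab N E (av N E i)) = false := hw
          rw [lab_av] at this
          exact Bool.noConfusion this
        · have hb : α (Sum.inr (g N E i)) = false := by
            have : labEval α (lab N E (bv N E i)) = false := hw
            rwa [lab_bv] at this
          refine ⟨dEdge N E i, ?_, (mem_dEdge N E).2 (Or.inr rfl)⟩
          rw [Finset.mem_union, Finset.mem_image, Finset.mem_image]
          exact Or.inr ⟨i, Finset.mem_filter.2 ⟨Finset.mem_univ _, hb⟩, rfl⟩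
  · -- degree bound
    intro w
    rcases vert_cases N E w with ⟨v, rfl⟩ | ⟨i, rfl⟩ | ⟨i, rfl⟩
    · have hsub : ((prog N E).edges.filter fun x => ov N E v ∈ x) ⊆
          (Finset.univ.filter fun i => v ∈ g N E i).image (eEdge N E) := by
        intro x hx
        rw [Finset.mem_filter] at hx
        rcases (mem_prog_edges N E).1 hx.1 with ⟨i, rfl⟩ | ⟨i, rfl⟩
        · rw [Finset.mem_image]
          exact ⟨i, Finset.mem_filter.2 ⟨Finset.mem_univ _,
            (ov_mem_eEdge_iff N E).1 hx.2⟩, rfl⟩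
        · exact absurd hx.2 (ov_not_mem_dEdge N E)
      have h1 := Finset.card_le_card hsub
      rw [Finset.card_image_of_injective _ (eEdge_inj N E)] at h1
      have h2 : (Finset.univ.filter fun i => v ∈ g N E i).card =
          (E.filter fun e => v ∈ e).card := by
        apply Finset.card_bij (fun i _ => g N E i)
        · intro i hi
          rw [Finset.mem_filter] at hi ⊢
          exact ⟨g_mem N E i, hi.2⟩
        · intro i _ j _ h
          exact g_inj N E h
        · intro e he
          rw [Finset.mem_filter] at he
          obtain ⟨i, rfl⟩ := g_surj N E he.1
          exact ⟨i, Finset.mem_filter.2 ⟨Finset.mem_univ _, he.2⟩, rfl⟩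
      calc ((prog N E).edges.filter fun x => ov N E v ∈ x).card
          ≤ (E.filter fun e => v ∈ e).card := by rw [← h2]; exact h1
        _ ≤ d := hdeg v
        _ ≤ max 2 d := le_max_right _ _
    · have hsub : ((prog N E).edges.filter fun x => av N E i ∈ x) ⊆
          {eEdge N E i, dEdge N E i} := by
        intro x hx
        rw [Finset.mem_filter] at hx
        rw [Finset.mem_insert, Finset.mem_singleton]
        rcases (mem_prog_edges N E).1 hx.1 with ⟨j, rfl⟩ | ⟨j, rfl⟩
        · exact Or.inl (congrArg _ ((av_mem_eEdge_iff N E).1 hx.2).symm)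
        · exact Or.inr (congrArg _ ((av_mem_dEdge_iff N E).1 hx.2).symm)
      calc ((prog N E).edges.filter fun x => av N E i ∈ x).card
          ≤ ({eEdge N E i, dEdge N E i} : Finset _).card := Finset.card_le_card hsub
        _ ≤ 2 := Finset.card_insert_le _ _ |>.trans (by simp)
        _ ≤ max 2 d := le_max_left _ _
    · have hsub : ((prog N E).edges.filter fun x => bv N E i ∈ x) ⊆
          {dEdge N E i} := by
        intro x hx
        rw [Finset.mem_filter] at hx
        rw [Finset.mem_singleton]
        rcases (mem_prog_edges N E).1 hx.1 with ⟨j, rfl⟩ | ⟨j, rfl⟩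
        · exact absurd hx.2 (bv_not_mem_eEdge N E)
        · exact congrArg _ ((bv_mem_dEdge_iff N E).1 hx.2).symm
      calc ((prog N E).edges.filter fun x => bv N E i ∈ x).card
          ≤ ({dEdge N E i} : Finset _).card := Finset.card_le_card hsub
        _ ≤ 2 := by simp
        _ ≤ max 2 d := le_max_left _ _
  · -- size bound
    have hE : (prog N E).edges.card ≤ k N E + k N E := by
      refine (Finset.card_union_le _ _).trans ?_
      have h1 : (Finset.univ.image (eEdge N E)).card ≤ k N E := by
        refine (Finset.card_image_le).trans ?_
        simp
      have h2 : (Finset.univ.image (dEdge N E)).card ≤ k N E := by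
        refine (Finset.card_image_le).trans ?_
        simp
      omega
    have hnv : (prog N E).nv = N + k N E + k N E := rfl
    have hk : k N E = E.card := rfl
    unfold MonHGP.size
    omega
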